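/- Let A be an N×N complex matrix. Then there exists an N×N complex matrix B and a polynomial r ∈ ℂ[x] such that A = r(B) and B is nonderogatory (its characteristic polynomial equals its minimal polynomial). -/

import Mathlib

set_option maxHeartbeats 1000000

open Polynomial Module

section helpers

variable {ι : Type} [DecidableEq ι] {Q : ι → Type} [∀ i, AddCommGroup (Q i)]
  [∀ i, Module ℂ (Q i)]

/-- `aeval` on a direct sum acts componentwise. -/
lemma aeval_lof (u : Module.End ℂ (DirectSum ι Q)) (i : ι) (v : Module.End ℂ (Q i))
    (h : ∀ x, u (DirectSum.lof ℂ ι Q i x) = DirectSum.lof ℂ ι Q i (v x))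
    (p : ℂ[X]) (x : Q i) :
    Polynomial.aeval u p (DirectSum.lof ℂ ι Q i x)
      = DirectSum.lof ℂ ι Q i (Polynomial.aeval v p x) := by
  have hpow : ∀ (n : ℕ) (x : Q i), (u ^ n) (DirectSum.lof ℂ ι Q i x)
      = DirectSum.lof ℂ ι Q i ((v ^ n) x) := by
    intro n
    induction n with
    | zero => intro x; simp
    | succ k ih =>
        intro x
        rw [pow_succ, Module.End.mul_apply, h, ih, ← Module.End.mul_apply, ← pow_succ]
  induction p using Polynomial.induction_on' with
  | add p q hp hq => simp [hp, hq]
  | monomial n a =>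
      simp [aeval_monomial, Module.End.mul_apply, Module.algebraMap_end_apply, hpow]

end helpers

lemma mk_mul_eq_smul (I : Ideal ℂ[X]) (p : ℂ[X]) (x : ℂ[X] ⧸ I) :
    Ideal.Quotient.mk I p * x = p • x := by
  obtain ⟨q, rfl⟩ := Ideal.Quotient.mk_surjective x
  rw [← map_mul]
  rfl

theorem stmt_8 {N : ℕ} (A : Matrix (Fin N) (Fin N) ℂ) :
    ∃ (B : Matrix (Fin N) (Fin N) ℂ) (r : Polynomial ℂ),
      A = Polynomial.aeval B r ∧ B.charpoly = minpoly ℂ B := by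
  classical
  set f : Module.End ℂ (Fin N → ℂ) := Matrix.toLin' A with hfdef
  -- the `ℂ[X]`-module given by `f` is torsion
  have htors : Module.IsTorsion ℂ[X] (Module.AEval' f) := by
    intro x
    refine ⟨⟨f.charpoly, mem_nonZeroDivisors_of_ne_zero f.charpoly_monic.ne_zero⟩, ?_⟩
    show (f.charpoly : ℂ[X]) • x = 0
    apply (Module.AEval'.of f).symm.injective
    rw [Module.AEval.of_symm_smul, f.aeval_self_charpoly]
    simp
  obtain ⟨ι, hι, p, hp, e, ⟨E⟩⟩ := Module.equiv_directSum_of_isTorsion htors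
  haveI := hι
  -- the irreducible factors are linear
  have hroot : ∀ i, ∃ l : ℂ, Associated (p i) (X - C l) := by
    intro i
    obtain ⟨l, hl⟩ := Complex.exists_root (Polynomial.degree_pos_of_irreducible (hp i))
    exact ⟨l, ((irreducible_X_sub_C l).associated_of_dvd (hp i)
      (dvd_iff_isRoot.mpr hl)).symm⟩
  choose l hl using hroot
  have hspan : ∀ i, (ℂ[X] ∙ p i ^ e i) = Ideal.span {(X - C (l i)) ^ e i} := fun i =>
    Ideal.span_singleton_eq_span_singleton.mpr (hl i).pow_pow
  -- distinct shifted eigenvalues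
  set μ : ι → ℂ := fun i => ((Fintype.equivFin ι i : ℕ) : ℂ) with hμdef
  have hμ : Function.Injective μ := by
    intro i j h
    exact (Fintype.equivFin ι).injective (Fin.val_injective (Nat.cast_injective h))
  set c : ι → ℂ := fun i => μ i - l i with hcdef
  have hcl : ∀ i, c i + l i = μ i := fun i => by simp [hcdef]
  -- coprimality
  have hcop : Pairwise (Function.onFun IsCoprime fun i => (X - C (μ i)) ^ e i) := by
    intro i j hij
    exact (Polynomial.isCoprime_X_sub_C_of_isUnit_sub
      ((sub_ne_zero.mpr (hμ.ne hij)).isUnit)).pow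
  set J : ι → Ideal ℂ[X] := fun i => Ideal.span {(X - C (μ i)) ^ e i} with hJdef
  have hJcop : Pairwise (Function.onFun IsCoprime J) := fun i j hij =>
    (Ideal.isCoprime_span_singleton_iff _ _).mpr (hcop hij)
  -- the interpolation polynomial via CRT
  obtain ⟨rq, hrq⟩ := Ideal.quotientInfToPiQuotient_surj hJcop
    (fun i => Ideal.Quotient.mk (J i) (X - C (c i)))
  obtain ⟨r, rfl⟩ := Ideal.Quotient.mk_surjective rq
  have hr : ∀ i, r - (X - C (c i)) ∈ J i := by
    intro i
    have h1 := congrFun hrq i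
    rw [Ideal.quotientInfToPiQuotient_mk'] at h1
    rwa [Ideal.Quotient.eq] at h1
  -- the shifted endomorphisms on the factors
  set t : ∀ i, ℂ[X] ⧸ (ℂ[X] ∙ p i ^ e i) :=
    fun i => Ideal.Quotient.mkₐ ℂ _ (X + C (c i)) with htdef
  set g1 : ∀ i, Module.End ℂ (ℂ[X] ⧸ (ℂ[X] ∙ p i ^ e i)) :=
    fun i => Algebra.lmul ℂ _ (t i) with hg1def
  set W := DirectSum ι (fun i => ℂ[X] ⧸ (ℂ[X] ∙ p i ^ e i)) with hWdef
  set gW : Module.End ℂ W :=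
    DirectSum.toModule ℂ ι W (fun i => (DirectSum.lof ℂ ι _ i).comp (g1 i)) with hgWdef
  have hcomp : ∀ i x, gW (DirectSum.lof ℂ ι _ i x) = DirectSum.lof ℂ ι _ i (g1 i x) := by
    intro i x
    rw [hgWdef]
    exact DirectSum.toModule_lof (R := ℂ) (N := W)
      (φ := fun i => (DirectSum.lof ℂ ι (fun i => ℂ[X] ⧸ Submodule.span ℂ[X] {p i ^ e i}) i).comp (g1 i)) i x
  -- key computation : `mk ((X - C (l i)) ^ e i) = 0`
  have hzero : ∀ i,
      (Ideal.Quotient.mk (Submodule.span ℂ[X] {p i ^ e i}) ((X - C (l i)) ^ e i)) = 0 := by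
    intro i
    rw [Ideal.Quotient.eq_zero_iff_mem, hspan i]
    exact Ideal.subset_span rfl
  -- aeval of r at g1 i is multiplication by X
  have haev1 : ∀ i (x : ℂ[X] ⧸ (ℂ[X] ∙ p i ^ e i)),
      Polynomial.aeval (g1 i) r x = (X : ℂ[X]) • x := by
    intro i x
    obtain ⟨s, hs⟩ := (Ideal.mem_span_singleton).mp (hr i)
    have hr' : r = (X - C (c i)) + (X - C (μ i)) ^ e i * s := by
      rw [← hs]; ring
    have hXc : X + C (c i) - C (μ i) = X - C (l i) := by
      rw [← hcl i, C_add]; ring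
    have h2b : Polynomial.aeval (X + C (c i)) r
        = X + (X - C (l i)) ^ e i * Polynomial.aeval (X + C (c i)) s := by
      rw [hr']
      simp only [map_add, map_mul, map_pow, map_sub, aeval_X, aeval_C]
      rw [show (algebraMap ℂ ℂ[X]) = C from rfl, hXc]
      ring
    have h2 : Polynomial.aeval (t i) r = Ideal.Quotient.mk (Submodule.span ℂ[X] {p i ^ e i}) X := by
      have h2a : Polynomial.aeval (t i) r
          = Ideal.Quotient.mkₐ ℂ (Submodule.span ℂ[X] {p i ^ e i})
              (Polynomial.aeval (X + C (c i)) r) :=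
        Polynomial.aeval_algHom_apply _ _ _
      rw [h2a, h2b]
      rw [Ideal.Quotient.mkₐ_eq_mk, map_add, map_mul, hzero i, zero_mul, add_zero]
    have h2c : Polynomial.aeval (g1 i) r
        = Algebra.lmul ℂ (ℂ[X] ⧸ Submodule.span ℂ[X] {p i ^ e i}) (Polynomial.aeval (t i) r) := by
      rw [hg1def]
      exact Polynomial.aeval_algHom_apply _ _ _
    rw [h2c, h2]
    rw [Algebra.coe_lmul_eq_mul, LinearMap.mul_apply']
    exact mk_mul_eq_smul _ _ _
  -- the multiplication-by-X endomorphism of W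
  set sX : Module.End ℂ W :=
    (LinearMap.lsmul ℂ[X] W (X : ℂ[X])).restrictScalars ℂ with hsXdef
  have hsX : ∀ (w : W), sX w = (X : ℂ[X]) • w := fun w => rfl
  have hsmul_lof : ∀ (q : ℂ[X]) i (x : ℂ[X] ⧸ (ℂ[X] ∙ p i ^ e i)),
      q • DirectSum.lof ℂ ι (fun i => ℂ[X] ⧸ Submodule.span ℂ[X] {p i ^ e i}) i x
        = DirectSum.lof ℂ ι (fun i => ℂ[X] ⧸ Submodule.span ℂ[X] {p i ^ e i}) i (q • x) := by
    intro q i x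
    exact (DFinsupp.single_smul (β := fun i => ℂ[X] ⧸ Submodule.span ℂ[X] {p i ^ e i}) q x).symm
  have haevW : Polynomial.aeval gW r = sX := by
    apply DirectSum.linearMap_ext
    intro i
    apply LinearMap.ext
    intro x
    simp only [LinearMap.comp_apply]
    rw [aeval_lof gW i (g1 i) (hcomp i) r x, haev1 i x, hsX, hsmul_lof]
  -- transport to matrices
  set eMW : (Fin N → ℂ) ≃ₗ[ℂ] W := (Module.AEval'.of f).trans (E.restrictScalars ℂ)
    with heMWdef
  set Ψ : Module.End ℂ W ≃ₐ[ℂ] Matrix (Fin N) (Fin N) ℂ :=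
    (eMW.symm.conjAlgEquiv ℂ).trans algEquivMatrix' with hΨdef
  refine ⟨Ψ gW, r, ?_, ?_⟩
  · -- A = aeval B r
    have h5 : Polynomial.aeval (Ψ gW) r = Ψ (Polynomial.aeval gW r) :=
      Polynomial.aeval_algHom_apply Ψ.toAlgHom gW r
    rw [h5, haevW]
    -- Ψ sX = A
    have h6 : eMW.symm.conjAlgEquiv ℂ sX = f := by
      apply LinearMap.ext
      intro m
      show eMW.symm.conj sX m = f m
      rw [LinearEquiv.conj_apply]
      simp only [LinearMap.comp_apply, LinearEquiv.coe_coe, LinearEquiv.symm_symm]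
      rw [hsX]
      rw [heMWdef]
      simp only [LinearEquiv.trans_apply, LinearEquiv.symm_trans_apply,
        LinearEquiv.restrictScalars_apply, LinearEquiv.restrictScalars_symm_apply]
      rw [← map_smul E, Module.AEval'.X_smul_of, E.symm_apply_apply]
      simp
    rw [hΨdef]
    simp only [AlgEquiv.trans_apply]
    rw [h6]
    show A = LinearMap.toMatrix' f
    rw [hfdef, LinearMap.toMatrix'_toLin']
  · -- charpoly = minpoly
    letI : Ring (Module.End ℂ W) := @Module.End.instRing ℂ _ _ (@DirectSum.instAddCommGroup ι _ (fun i => Submodule.Quotient.addCommGroup _)) _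
    have hmin : minpoly ℂ (Ψ gW) = minpoly ℂ gW := minpoly.algEquiv_eq Ψ gW
    -- each (X - μ i)^(e i) divides the minimal polynomial
    have hdvd : ∀ i, (X - C (μ i)) ^ e i ∣ minpoly ℂ gW := by
      intro i
      set m := minpoly ℂ gW with hmdef
      have h0 : Polynomial.aeval gW m = 0 := minpoly.aeval ℂ gW
      have h1 : ∀ x, Polynomial.aeval (g1 i) m x = 0 := by
        intro x
        have h2 : (DirectSum.lof ℂ ι _ i (Polynomial.aeval (g1 i) m x) : W) = 0 := by
          rw [← aeval_lof gW i (g1 i) (hcomp i), h0]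
          exact LinearMap.zero_apply _
        have h3 := congrArg (fun w : W => w i) h2
        simpa [DirectSum.lof_apply] using h3
      have h2 : Polynomial.aeval (t i) m = 0 := by
        have h3 := h1 1
        have h2c : Polynomial.aeval (g1 i) m
            = Algebra.lmul ℂ (ℂ[X] ⧸ Submodule.span ℂ[X] {p i ^ e i})
                (Polynomial.aeval (t i) m) := by
          rw [hg1def]
          exact Polynomial.aeval_algHom_apply _ _ _
        rw [h2c, Algebra.coe_lmul_eq_mul, LinearMap.mul_apply', mul_one] at h3
        exact h3
      have h4 : (X - C (l i)) ^ e i ∣ Polynomial.aeval (X + C (c i)) m := by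
        rw [← Ideal.mem_span_singleton, ← hspan i, ← Ideal.Quotient.eq_zero_iff_mem]
        have h5 : (Ideal.Quotient.mk (Submodule.span ℂ[X] {p i ^ e i}))
              (Polynomial.aeval (X + C (c i)) m)
            = Polynomial.aeval (t i) m := by
          rw [htdef]
          rw [show Polynomial.aeval (t i) m
            = Ideal.Quotient.mkₐ ℂ (Submodule.span ℂ[X] {p i ^ e i})
                (Polynomial.aeval (X + C (c i)) m) from Polynomial.aeval_algHom_apply _ _ _]
          rw [Ideal.Quotient.mkₐ_eq_mk]
        rw [h5, h2]
      have h6 := map_dvd (Polynomial.aeval (X - C (c i)) : ℂ[X] →ₐ[ℂ] ℂ[X]) h4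
      have h7 : Polynomial.aeval (X - C (c i)) (Polynomial.aeval (X + C (c i)) m) = m := by
        rw [← comp_eq_aeval, ← comp_eq_aeval, Polynomial.comp_assoc]
        simp
      have h8 : Polynomial.aeval (X - C (c i)) ((X - C (l i)) ^ e i)
          = (X - C (μ i)) ^ e i := by
        simp only [map_pow, map_sub, aeval_X, aeval_C]
        rw [show (algebraMap ℂ ℂ[X]) = C from rfl, ← hcl i, C_add]
        ring
      rwa [h7, h8] at h6
    have hProd : (∏ i, (X - C (μ i)) ^ e i) ∣ minpoly ℂ (Ψ gW) := by
      rw [hmin]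
      exact Fintype.prod_dvd_of_coprime hcop hdvd
    -- degree count
    have hpne : ∀ i, p i ^ e i ≠ 0 := fun i => pow_ne_zero _ (hp i).ne_zero
    have hpdeg : ∀ i, (p i).natDegree = 1 := by
      intro i
      have := (IsAlgClosed.splits (p i)).degree_eq_one_of_irreducible (hp i)
      exact natDegree_eq_of_degree_eq_some this
    haveI hfin : ∀ i, Module.Finite ℂ (ℂ[X] ⧸ (ℂ[X] ∙ p i ^ e i)) := by
      intro i
      exact Module.Finite.of_basis (AdjoinRoot.powerBasis (hpne i)).basis
    have hfr : ∀ i, Module.finrank ℂ (ℂ[X] ⧸ (ℂ[X] ∙ p i ^ e i)) = e i := by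
      intro i
      have h9 := (AdjoinRoot.powerBasis (hpne i)).finrank
      rw [show (AdjoinRoot.powerBasis (hpne i)).dim = (p i ^ e i).natDegree from rfl] at h9
      rw [natDegree_pow, hpdeg i, mul_one] at h9
      exact h9
    have hsum : ∑ i, e i = N := by
      have h10 : Module.finrank ℂ W = N := by
        rw [← LinearEquiv.finrank_eq eMW]
        simp [Module.finrank_fintype_fun_eq_card]
      have h11 : Module.finrank ℂ W
          = ∑ i, Module.finrank ℂ (ℂ[X] ⧸ Submodule.span ℂ[X] {p i ^ e i}) :=
        Module.finrank_directSum ℂ (fun i => ℂ[X] ⧸ Submodule.span ℂ[X] {p i ^ e i})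
      rw [← h10, h11]
      exact (Finset.sum_congr rfl (fun i _ => (hfr i).symm))
    have hdegP : (∏ i, (X - C (μ i)) ^ e i).natDegree = N := by
      rw [Polynomial.natDegree_prod]
      · simp only [Polynomial.natDegree_pow, Polynomial.natDegree_X_sub_C, mul_one]
        exact hsum
      · intro i _
        exact pow_ne_zero _ (Polynomial.X_sub_C_ne_zero _)
    -- conclude
    set B := Ψ gW with hBdef
    have hmono : (minpoly ℂ B).Monic := minpoly.monic (Matrix.isIntegral B)
    have hd1 : N ≤ (minpoly ℂ B).natDegree := by
      have h12 := Polynomial.natDegree_le_of_dvd hProd hmono.ne_zero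
      rw [hdegP] at h12
      exact h12
    obtain ⟨u, hu⟩ := Matrix.minpoly_dvd_charpoly B
    have humonic : u.Monic := by
      have := Matrix.charpoly_monic B
      rw [hu] at this
      exact hmono.of_mul_monic_left this
    have hdeg : (minpoly ℂ B).natDegree + u.natDegree = N := by
      have h11 := congrArg Polynomial.natDegree hu
      rw [Polynomial.natDegree_mul hmono.ne_zero humonic.ne_zero,
        Matrix.charpoly_natDegree_eq_dim, Fintype.card_fin] at h11
      omega
    have hu0 : u.natDegree = 0 := by omega
    rw [hu, humonic.natDegree_eq_zero.mp hu0, mul_one]
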